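/- arXiv:1807.02582 — 3 statements merged into one kernel-verified Lean document; each statement's English description precedes it below -/
import Mathlib

section
/- Let k be a kernel on X, X = (x_1,...,x_n) points with invertible kernel matrix k_XX, and f : X → R. Then the function f̂(x) = k_{xX} k_{XX}^{-1} f_X (where f_X = (f(x_1),...,f(x_n))^T and k_{xX} = (k(x,x_1),...,k(x,x_n))) is the unique solution to the problem: minimize ‖g‖_{H_k} over g ∈ H_k subject to g(x_i) = f(x_i) for i = 1,...,n. -/
open scoped RealInnerProductSpace
open Matrix

/-- Kernel interpolation: with `k` a kernel on `X` with RKHS `H_k`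
(represented by a Hilbert space `H` with canonical feature map `K x = k(·,x)`, so that
`g(x) = ⟪g, K x⟫` by the reproducing property), points `x 1, ..., x n` with invertible
kernel matrix `k_XX`, and a target function `f : X → ℝ`, the function
`f̂ = ∑ i, α i • k(·, x i)` with `α = k_XX⁻¹ f_X` is the unique solution to:
minimize `‖g‖_{H_k}` over `g ∈ H_k` subject to `g (x i) = f (x i)` for all `i`. -/
theorem stmt_1 {X : Type*} [Nonempty X] {H : Type*} [NormedAddCommGroup H]
    [InnerProductSpace ℝ H] (K : X → H) (n : ℕ) (x : Fin n → X) (f : X → ℝ)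
    (kXX : Matrix (Fin n) (Fin n) ℝ)
    (hkXX : ∀ i j, kXX i j = ⟪K (x i), K (x j)⟫)
    (hinv : IsUnit kXX)
    (α : Fin n → ℝ) (hα : α = kXX⁻¹ *ᵥ fun i => f (x i))
    (fhat : H) (hfhat : fhat = ∑ i, α i • K (x i)) :
    (∀ i, ⟪fhat, K (x i)⟫ = f (x i)) ∧
    ∀ g : H, (∀ i, ⟪g, K (x i)⟫ = f (x i)) →
      ‖fhat‖ ≤ ‖g‖ ∧ (‖g‖ = ‖fhat‖ → g = fhat) := by
  have hdet : IsUnit kXX.det := (Matrix.isUnit_iff_isUnit_det kXX).mp hinv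
  have hinterp : ∀ j, ⟪fhat, K (x j)⟫ = f (x j) := by
    intro j
    have : ⟪fhat, K (x j)⟫ = ∑ i, α i * kXX i j := by
      rw [hfhat, sum_inner]
      refine Finset.sum_congr rfl fun i _ => ?_
      rw [real_inner_smul_left, hkXX]
    rw [this]
    have : ∑ i, α i * kXX i j = (kXX *ᵥ α) j := by
      simp only [Matrix.mulVec, dotProduct]
      exact Finset.sum_congr rfl fun i _ => by
        rw [hkXX, hkXX, real_inner_comm, mul_comm]
    rw [this, hα, Matrix.mulVec_mulVec, Matrix.mul_nonsing_inv kXX hdet, Matrix.one_mulVec]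
  refine ⟨hinterp, fun g hg => ?_⟩
  have horth : ⟪g - fhat, fhat⟫ = 0 := by
    rw [hfhat, inner_sum]
    refine Finset.sum_eq_zero fun i _ => ?_
    rw [real_inner_smul_right, inner_sub_left, hg i, ← hfhat, hinterp i]
    ring
  have hpyth : ‖g‖ ^ 2 = ‖fhat‖ ^ 2 + ‖g - fhat‖ ^ 2 := by
    have h := norm_add_sq_real fhat (g - fhat)
    have he : fhat + (g - fhat) = g := by abel
    rw [he, real_inner_comm, horth] at h
    rw [h]; ring
  constructor
  · nlinarith [norm_nonneg g, norm_nonneg fhat, norm_nonneg (g - fhat), sq_nonneg (‖g - fhat‖)]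
  · intro heq
    have : ‖g - fhat‖ ^ 2 = 0 := by rw [heq] at hpyth; linarith
    have : ‖g - fhat‖ = 0 := by
      have := pow_eq_zero_iff (n := 2) (by norm_num) |>.mp this
      exact this
    have := norm_eq_zero.mp this
    exact sub_eq_zero.mp this
end

section
/- Let k be a kernel on X, σ > 0, and define the kernel k^σ(x,y) = k(x,y) + σ² δ(x,y) where δ(x,y) = 1 if x = y and 0 otherwise. Let w^σ(x) = (k_XX + σ² I_n)^{-1} k_{Xx} ∈ R^n, and let k̄(x,x) = k(x,x) - k_{xX}(k_XX + σ² I_n)^{-1} k_{Xx} be the GP posterior variance. Then for any x ∈ X with x ≠ x_i for all i, sqrt(k̄(x,x) + σ²) equals the supremum over g in the unit ball of the RKHS H_{k^σ} of g(x) - ∑_{i=1}^n w_i^σ(x) g(x_i). -/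
open scoped RealInnerProductSpace
open Matrix

lemma isGreatest_inner_ball {G : Type*} [NormedAddCommGroup G] [InnerProductSpace ℝ G]
    (v : G) : IsGreatest {s : ℝ | ∃ g : G, ‖g‖ ≤ 1 ∧ s = ⟪g, v⟫} ‖v‖ := by
  constructor
  · rcases eq_or_ne v 0 with rfl | hv
    · exact ⟨0, by simp⟩
    · refine ⟨‖v‖⁻¹ • v, ?_, ?_⟩
      · simp [norm_smul, abs_of_nonneg, inv_mul_cancel₀ (norm_ne_zero_iff.2 hv)]
      · rw [real_inner_smul_left, real_inner_self_eq_norm_mul_norm,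
          inv_mul_cancel_left₀ (norm_ne_zero_iff.2 hv)]
  · rintro s ⟨g, hg, rfl⟩
    calc ⟪g, v⟫ ≤ ‖g‖ * ‖v‖ := real_inner_le_norm g v
    _ ≤ 1 * ‖v‖ := by gcongr
    _ = ‖v‖ := one_mul _

/-- Worst-case interpretation of the GP posterior variance with noise.
Let `k` be a kernel on `X` (represented by a Hilbert space `H` with feature map `K`),
`σ > 0`, and let `k^σ(x,y) = k(x,y) + σ² δ(x,y)` be the noise-augmented kernel, whose
RKHS is represented by a Hilbert space `G` with feature map `Kσ` satisfying
`⟪Kσ x, Kσ y⟫ = k(x,y) + σ² δ(x,y)` (so `g(x) = ⟪g, Kσ x⟫` for `g ∈ H_{k^σ}`).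
With distinct points `x 1, ..., x n`, weights `w = (k_XX + σ² I)⁻¹ k_{Xt}` and posterior
variance `k̄(t,t) = k(t,t) - k_{tX} (k_XX + σ² I)⁻¹ k_{Xt}`, for any `t` distinct from all
`x i` the quantity `sqrt (k̄(t,t) + σ²)` is the supremum over `g` in the unit ball of
`H_{k^σ}` of `g(t) - ∑ i, w i * g (x i)`. -/
theorem stmt_5 {X : Type*} [Nonempty X] [DecidableEq X]
    {H G : Type*} [NormedAddCommGroup H] [InnerProductSpace ℝ H]
    [NormedAddCommGroup G] [InnerProductSpace ℝ G]
    (K : X → H) (Kσ : X → G) (σ : ℝ) (hσ : 0 < σ)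
    (hGram : ∀ x y : X, ⟪Kσ x, Kσ y⟫ = ⟪K x, K y⟫ + σ ^ 2 * (if x = y then 1 else 0))
    (n : ℕ) (x : Fin n → X) (hx : Function.Injective x)
    (t : X) (ht : ∀ i, t ≠ x i)
    (kXX : Matrix (Fin n) (Fin n) ℝ) (hkXX : ∀ i j, kXX i j = ⟪K (x i), K (x j)⟫)
    (hinv : IsUnit (kXX + σ ^ 2 • (1 : Matrix (Fin n) (Fin n) ℝ)))
    (w : Fin n → ℝ)
    (hw : w = (kXX + σ ^ 2 • (1 : Matrix (Fin n) (Fin n) ℝ))⁻¹ *ᵥ fun i => ⟪K (x i), K t⟫)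
    (kbar : ℝ) (hkbar : kbar = ⟪K t, K t⟫ - (fun i => ⟪K t, K (x i)⟫) ⬝ᵥ w) :
    IsLUB {s : ℝ | ∃ g : G, ‖g‖ ≤ 1 ∧ s = ⟪g, Kσ t⟫ - ∑ i, w i * ⟪g, Kσ (x i)⟫}
      (Real.sqrt (kbar + σ ^ 2)) := by
  set A : Matrix (Fin n) (Fin n) ℝ := kXX + σ ^ 2 • (1 : Matrix (Fin n) (Fin n) ℝ) with hA
  set v : G := Kσ t - ∑ i, w i • Kσ (x i) with hv
  have hset : {s : ℝ | ∃ g : G, ‖g‖ ≤ 1 ∧ s = ⟪g, Kσ t⟫ - ∑ i, w i * ⟪g, Kσ (x i)⟫}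
      = {s : ℝ | ∃ g : G, ‖g‖ ≤ 1 ∧ s = ⟪g, v⟫} := by
    ext s
    simp only [Set.mem_setOf_eq, hv, inner_sub_right, inner_sum, real_inner_smul_right]
  -- A *ᵥ w = k_Xt
  have hAw : A *ᵥ w = fun i => ⟪K (x i), K t⟫ := by
    rw [hw, Matrix.mulVec_mulVec, Matrix.mul_nonsing_inv _
      ((Matrix.isUnit_iff_isUnit_det A).1 hinv), Matrix.one_mulVec]
  -- norm computation
  have hnorm : ⟪v, v⟫ = kbar + σ ^ 2 := by
    have hGtt : ⟪Kσ t, Kσ t⟫ = ⟪K t, K t⟫ + σ ^ 2 := by rw [hGram]; simp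
    have hGti : ∀ i, ⟪Kσ t, Kσ (x i)⟫ = ⟪K t, K (x i)⟫ := by
      intro i; simp [hGram, ht i]
    have hGit : ∀ i, ⟪Kσ (x i), Kσ t⟫ = ⟪K t, K (x i)⟫ := by
      intro i; rw [real_inner_comm]; exact hGti i
    have hGij : ∀ i j, ⟪Kσ (x i), Kσ (x j)⟫ = A i j := by
      intro i j
      rw [hGram]
      simp only [hA, Matrix.add_apply, Matrix.smul_apply, Matrix.one_apply, hkXX, smul_eq_mul]
      by_cases h : i = j
      · subst h; simp
      · simp [h, hx.ne h]
    simp only [hv, inner_sub_left, inner_sub_right, inner_sum, sum_inner,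
      real_inner_smul_left, real_inner_smul_right, hGtt, hGti, hGit, hGij]
    have hdd : ∀ i, ∑ j, w i * (w j * A j i) = w i * ⟪K t, K (x i)⟫ := by
      intro i
      have h1 : ∑ j, w i * (w j * A j i) = w i * ((A *ᵥ w) i) := by
        rw [Matrix.mulVec, dotProduct, Finset.mul_sum]
        refine Finset.sum_congr rfl fun j _ => ?_
        have hsym : A j i = A i j := by rw [← hGij, ← hGij, real_inner_comm]
        rw [hsym]; ring
      rw [h1, hAw]
      simp [real_inner_comm]
    have hz : ∑ i, (w i * ⟪K t, K (x i)⟫ - ∑ j, w i * (w j * A j i)) = 0 :=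
      Finset.sum_eq_zero fun i _ => by rw [hdd i]; ring
    have hS : (fun i => ⟪K t, K (x i)⟫ : Fin n → ℝ) ⬝ᵥ w
        = ∑ i, w i * ⟪K t, K (x i)⟫ := by
      rw [dotProduct]; exact Finset.sum_congr rfl fun i _ => mul_comm _ _
    rw [hz, hkbar, hS]
    ring
  have hnn : 0 ≤ kbar + σ ^ 2 := hnorm ▸ real_inner_self_nonneg
  have hnv : ‖v‖ = Real.sqrt (kbar + σ ^ 2) := by
    rw [← hnorm, real_inner_self_eq_norm_sq, Real.sqrt_sq (norm_nonneg v)]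
  rw [hset, ← hnv]
  exact (isGreatest_inner_ball v).isLUB
end

section
/- Let k be a bounded characteristic kernel on a measurable space X. Then for any probability measures P and Q on X: P = Q if and only if ∫ f dP = ∫ f dQ holds almost surely for f ~ GP(0,k). -/
open MeasureTheory
open scoped RealInnerProductSpace

open scoped ENNReal

section Aux

variable {X : Type*} [MeasurableSpace X] {H : Type*} [NormedAddCommGroup H]
    [InnerProductSpace ℝ H] [CompleteSpace H]

/-- Zero-one law for probability measures whose kernel feature map vanishes a.e.,
when the kernel is characteristic. -/
lemma aux_zero_one (K : X → H)
    (hchar : ∀ P Q : Measure X, IsProbabilityMeasure P → IsProbabilityMeasure Q →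
      (∫ x, K x ∂P) = (∫ x, K x ∂Q) → P = Q)
    (R : Measure X) [hR : IsProbabilityMeasure R]
    (hK0 : K =ᵐ[R] 0) (B : Set X) (hB : MeasurableSet B) : R B = 0 ∨ R B = 1 := by
  by_contra hc
  push_neg at hc
  obtain ⟨h0, h1⟩ := hc
  have hBle : R B ≤ 1 := prob_le_one
  have hne_top : R B ≠ ⊤ := (hBle.trans_lt ENNReal.one_lt_top).ne
  set R' : Measure X := (R B)⁻¹ • R.restrict B with hR'
  have hR'prob : IsProbabilityMeasure R' := by
    constructor
    rw [hR', Measure.smul_apply, Measure.restrict_apply MeasurableSet.univ, Set.univ_inter,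
      smul_eq_mul, ENNReal.inv_mul_cancel h0 hne_top]
  have hmean' : (∫ x, K x ∂ R') = ∫ x, K x ∂ R := by
    have h2 : (∫ x, K x ∂(R.restrict B)) = 0 :=
      integral_eq_zero_of_ae (ae_restrict_of_ae hK0)
    have h3 : (∫ x, K x ∂ R) = 0 := integral_eq_zero_of_ae hK0
    rw [hR', integral_smul_measure, h2, h3, smul_zero]
  have heq := hchar R' R hR'prob hR hmean'
  have hRB : R' B = R B := by rw [heq]
  rw [hR', Measure.smul_apply, Measure.restrict_apply hB, Set.inter_self, smul_eq_mul,
    ENNReal.inv_mul_cancel h0 hne_top] at hRB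
  exact h1 hRB.symm

/-- A measurable integrable function is a.e. constant (equal to its mean) under a
zero-one probability measure. -/
lemma aux_ae_const (R : Measure X) [IsProbabilityMeasure R]
    (h01 : ∀ B : Set X, MeasurableSet B → R B = 0 ∨ R B = 1)
    (f : X → ℝ) (hf : Measurable f) (hfi : Integrable f R) :
    f =ᵐ[R] fun _ => ∫ y, f y ∂ R := by
  set m := ∫ y, f y ∂ R with hm
  have key : ∀ g : X → ℝ, Measurable g → Integrable g R → (∫ y, g y ∂ R) = 0 →
      R {y | 0 < g y} = 0 := by
    intro g hg hgi hgz
    rcases h01 _ (measurableSet_lt measurable_const hg) with hh | hh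
    · exact hh
    · exfalso
      have hae : ∀ᵐ y ∂ R, 0 < g y := by
        rw [ae_iff]
        have hset : {y | ¬ 0 < g y} = {y | 0 < g y}ᶜ := rfl
        rw [hset, prob_compl_eq_zero_iff (measurableSet_lt measurable_const hg)]
        exact hh
      have hnn : 0 ≤ᵐ[R] g := hae.mono fun y hy => le_of_lt hy
      have h0 : g =ᵐ[R] 0 := (integral_eq_zero_iff_of_nonneg_ae hnn hgi).mp hgz
      obtain ⟨y, hy1, hy2⟩ := (hae.and h0).exists
      simp only [Pi.zero_apply] at hy2
      rw [hy2] at hy1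
      exact lt_irrefl 0 hy1
  have h1 : R {y | 0 < f y - m} = 0 := by
    apply key _ (hf.sub measurable_const) (hfi.sub (integrable_const m))
    simp only [Pi.sub_apply]
    rw [integral_sub hfi (integrable_const m), integral_const]
    simp [hm]
  have h2 : R {y | 0 < m - f y} = 0 := by
    apply key _ (measurable_const.sub hf) ((integrable_const m).sub hfi)
    simp only [Pi.sub_apply]
    rw [integral_sub (integrable_const m) hfi, integral_const]
    simp [hm]
  rw [Filter.EventuallyEq, ae_iff]
  refine measure_mono_null ?_ (measure_union_null h1 h2)
  intro y hy
  simp only [Set.mem_setOf_eq, Set.mem_union] at hy ⊢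
  rcases lt_or_gt_of_ne hy with hlt | hgt
  · right; linarith
  · left; linarith

end Aux


/-- Characteristic kernels and Gaussian processes. Let `k` be a bounded
characteristic kernel on a measurable space `X` (represented by a Hilbert space `H` with
canonical feature map `K`, `k x y = ⟪K x, K y⟫`; characteristic means the kernel mean map
`P ↦ ∫ K x ∂P` is injective on probability measures), and let `F : Ω → X → ℝ` be a
zero-mean Gaussian process with covariance `k`, i.e. `∫ ω, F ω x * F ω y ∂Pr = k x y`.
Then for probability measures `P`, `Q` on `X`: `P = Q` iff `∫ f dP = ∫ f dQ` holds almost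
surely for `f ~ GP(0,k)`. -/
theorem stmt_14 {X : Type*} [MeasurableSpace X] {H : Type*} [NormedAddCommGroup H]
    [InnerProductSpace ℝ H] [CompleteSpace H]
    (K : X → H) (Cb : ℝ) (hbd : ∀ x, ‖K x‖ ≤ Cb)
    (hchar : ∀ P Q : Measure X, IsProbabilityMeasure P → IsProbabilityMeasure Q →
      (∫ x, K x ∂P) = (∫ x, K x ∂Q) → P = Q)
    (P Q : Measure X) [IsProbabilityMeasure P] [IsProbabilityMeasure Q]
    (hKP : Integrable K P) (hKQ : Integrable K Q)
    {Ω : Type*} [MeasurableSpace Ω] (Pr : Measure Ω) [IsProbabilityMeasure Pr]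
    (F : Ω → X → ℝ) (hFmeas : Measurable (Function.uncurry F))
    (hFint : ∀ ω, Integrable (F ω) P ∧ Integrable (F ω) Q)
    (hcov : ∀ x y : X, ∫ ω, F ω x * F ω y ∂Pr = ⟪K x, K y⟫) :
    P = Q ↔ (∀ᵐ ω ∂Pr, (∫ x, F ω x ∂P) = ∫ x, F ω x ∂Q) := by
  constructor
  · rintro rfl
    exact Filter.Eventually.of_forall fun ω => rfl
  intro h
  -- basic measurability
  have hFmx : ∀ x, Measurable fun ω => F ω x := fun x =>
    hFmeas.comp (measurable_id.prodMk measurable_const)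
  have hFmω : ∀ ω, Measurable (F ω) := fun ω =>
    hFmeas.comp (measurable_const.prodMk measurable_id)
  -- the lintegral of the square
  set g : X → ℝ≥0∞ := fun x => ∫⁻ ω, ENNReal.ofReal (F ω x * F ω x) ∂Pr with hgdef
  have hgm : Measurable g := by
    apply Measurable.lintegral_prod_right'
      (f := fun p : X × Ω => ENNReal.ofReal (F p.2 p.1 * F p.2 p.1))
    exact ((hFmeas.comp measurable_swap).mul (hFmeas.comp measurable_swap)).ennreal_ofReal
  set S : Set X := {x | g x < ⊤} with hSdef
  have hSm : MeasurableSet S := measurableSet_lt hgm measurable_const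
  have hglint : ∀ x, g x = ∫⁻ ω, (‖F ω x * F ω x‖₊ : ℝ≥0∞) ∂Pr := by
    intro x
    refine lintegral_congr fun ω => ?_
    rw [← enorm_eq_nnnorm, Real.enorm_eq_ofReal (mul_self_nonneg _)]
  have hIntIff : ∀ x, Integrable (fun ω => F ω x * F ω x) Pr ↔ x ∈ S := by
    intro x
    constructor
    · intro hint
      have h2 : (∫⁻ ω, (‖F ω x * F ω x‖₊ : ℝ≥0∞) ∂Pr) < ⊤ := hint.2
      show g x < ⊤
      rw [hglint x]; exact h2
    · intro hx
      refine ⟨((hFmx x).mul (hFmx x)).aestronglyMeasurable, ?_⟩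
      show (∫⁻ ω, (‖F ω x * F ω x‖₊ : ℝ≥0∞) ∂Pr) < ⊤
      rw [← hglint x]; exact hx
  have hK0 : ∀ x, x ∉ S → K x = 0 := by
    intro x hx
    have hni : ¬ Integrable (fun ω => F ω x * F ω x) Pr := fun hi => hx ((hIntIff x).mp hi)
    have hu := integral_undef hni
    have h2 := hcov x x
    rw [hu] at h2
    exact inner_self_eq_zero.mp h2.symm
  have hgS : ∀ x ∈ S, g x = ENNReal.ofReal ⟪K x, K x⟫ := by
    intro x hx
    rw [hgdef]
    rw [← hcov x x, ofReal_integral_eq_lintegral_ofReal ((hIntIff x).mpr hx)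
      (Filter.Eventually.of_forall fun ω => mul_self_nonneg _)]
  have hgbd : ∀ x ∈ S, g x ≤ ENNReal.ofReal (Cb * Cb) := by
    intro x hx
    rw [hgS x hx]
    apply ENNReal.ofReal_le_ofReal
    rw [real_inner_self_eq_norm_sq, sq]
    exact mul_self_le_mul_self (norm_nonneg _) (hbd x)
  -- Fubini on S
  have key : ∀ (μ : Measure X), IsProbabilityMeasure μ → Integrable K μ → ∀ x, x ∈ S →
      Integrable (fun ω => (∫ y in S, F ω y ∂μ) * F ω x) Pr ∧
      (∫ ω, (∫ y in S, F ω y ∂μ) * F ω x ∂Pr) = ⟪∫ y, K y ∂μ, K x⟫ := by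
    intro μ hμ hKμ x hx
    have hfm : Measurable (Function.uncurry fun (y : X) (ω : Ω) => F ω y * F ω x) := by
      have h1 : Measurable fun p : X × Ω => F p.2 p.1 := hFmeas.comp measurable_swap
      have h2 : Measurable fun p : X × Ω => F p.2 x :=
        hFmeas.comp (measurable_snd.prodMk measurable_const)
      exact h1.mul h2
    have hprod : Integrable (Function.uncurry fun (y : X) (ω : Ω) => F ω y * F ω x)
        ((μ.restrict S).prod Pr) := by
      refine ⟨hfm.aestronglyMeasurable, ?_⟩
      show (∫⁻ p, (‖F p.2 p.1 * F p.2 x‖₊ : ℝ≥0∞) ∂((μ.restrict S).prod Pr)) < ⊤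
      have hb : ∀ p : X × Ω, (‖F p.2 p.1 * F p.2 x‖₊ : ℝ≥0∞)
          ≤ ENNReal.ofReal (F p.2 p.1 * F p.2 p.1) + ENNReal.ofReal (F p.2 x * F p.2 x) := by
        intro p
        set a := F p.2 p.1
        set b := F p.2 x
        have habs : (‖a * b‖₊ : ℝ≥0∞) = ENNReal.ofReal |a * b| := by
          rw [← enorm_eq_nnnorm, ← ofReal_norm_eq_enorm, Real.norm_eq_abs]
        rw [habs, ← ENNReal.ofReal_add (mul_self_nonneg a) (mul_self_nonneg b)]
        apply ENNReal.ofReal_le_ofReal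
        nlinarith [abs_mul a b, sq_abs a, sq_abs b, sq_nonneg (|a| - |b|), abs_nonneg a,
          abs_nonneg b, abs_nonneg (a * b)]
      calc (∫⁻ p, (‖F p.2 p.1 * F p.2 x‖₊ : ℝ≥0∞) ∂((μ.restrict S).prod Pr))
          ≤ ∫⁻ p, (ENNReal.ofReal (F p.2 p.1 * F p.2 p.1)
              + ENNReal.ofReal (F p.2 x * F p.2 x)) ∂((μ.restrict S).prod Pr) :=
            lintegral_mono hb
        _ = (∫⁻ p, ENNReal.ofReal (F p.2 p.1 * F p.2 p.1) ∂((μ.restrict S).prod Pr))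
              + ∫⁻ p, ENNReal.ofReal (F p.2 x * F p.2 x) ∂((μ.restrict S).prod Pr) := by
            apply lintegral_add_left
            exact ((hFmeas.comp measurable_swap).mul (hFmeas.comp measurable_swap)).ennreal_ofReal
        _ < ⊤ := by
            have e1 : (∫⁻ p, ENNReal.ofReal (F p.2 p.1 * F p.2 p.1) ∂((μ.restrict S).prod Pr))
                = ∫⁻ y, g y ∂(μ.restrict S) :=
              lintegral_prod _ (((hFmeas.comp measurable_swap).mul
                (hFmeas.comp measurable_swap)).ennreal_ofReal).aemeasurable
            have e2 : (∫⁻ p, ENNReal.ofReal (F p.2 x * F p.2 x) ∂((μ.restrict S).prod Pr))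
                = ∫⁻ y, g x ∂(μ.restrict S) :=
              lintegral_prod _ (((hFmeas.comp (measurable_snd.prodMk measurable_const)).mul
                (hFmeas.comp (measurable_snd.prodMk measurable_const))).ennreal_ofReal).aemeasurable
            rw [e1, e2]
            have b1 : (∫⁻ y, g y ∂(μ.restrict S)) ≤ ENNReal.ofReal (Cb * Cb) := by
              calc (∫⁻ y, g y ∂(μ.restrict S))
                  ≤ ∫⁻ _, ENNReal.ofReal (Cb * Cb) ∂(μ.restrict S) := by
                    apply lintegral_mono_ae
                    filter_upwards [ae_restrict_mem hSm] with y hy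
                    exact hgbd y hy
                _ = ENNReal.ofReal (Cb * Cb) * (μ.restrict S) Set.univ := lintegral_const _
                _ ≤ ENNReal.ofReal (Cb * Cb) * 1 := by
                    gcongr
                    rw [Measure.restrict_apply_univ]
                    exact prob_le_one
                _ = ENNReal.ofReal (Cb * Cb) := mul_one _
            have b2 : (∫⁻ _, g x ∂(μ.restrict S)) ≤ g x := by
              rw [lintegral_const]
              calc g x * (μ.restrict S) Set.univ ≤ g x * 1 := by
                    gcongr
                    rw [Measure.restrict_apply_univ]
                    exact prob_le_one
                _ = g x := mul_one _
            have hxlt : g x < ⊤ := hx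
            exact ENNReal.add_lt_top.mpr ⟨b1.trans_lt ENNReal.ofReal_lt_top,
              b2.trans_lt hxlt⟩
    have hKS : (∫ y in S, K y ∂μ) = ∫ y, K y ∂μ := by
      rw [← integral_add_compl hSm hKμ]
      have hz : (∫ y in Sᶜ, K y ∂μ) = 0 := by
        rw [setIntegral_congr_fun hSm.compl (g := fun _ => (0 : H))
          (fun y hy => hK0 y hy)]
        exact integral_zero _ _
      rw [hz, add_zero]
    have hswap := integral_integral_swap hprod
    have heq : ∀ ω, (∫ y in S, F ω y * F ω x ∂μ) = (∫ y in S, F ω y ∂μ) * F ω x :=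
      fun ω => integral_mul_const _ _
    constructor
    · exact hprod.integral_prod_right.congr (Filter.Eventually.of_forall heq)
    · calc (∫ ω, (∫ y in S, F ω y ∂μ) * F ω x ∂Pr)
          = ∫ ω, ∫ y in S, F ω y * F ω x ∂μ ∂Pr :=
            integral_congr_ae (Filter.Eventually.of_forall fun ω => (heq ω).symm)
        _ = ∫ y in S, ∫ ω, F ω y * F ω x ∂Pr ∂μ := hswap.symm
        _ = ∫ y in S, ⟪K y, K x⟫ ∂μ :=
            integral_congr_ae (Filter.Eventually.of_forall fun y => hcov y x)
        _ = ∫ y in S, ⟪K x, K y⟫ ∂μ := by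
            refine integral_congr_ae (Filter.Eventually.of_forall fun y => ?_)
            exact real_inner_comm _ _
        _ = ⟪K x, ∫ y in S, K y ∂μ⟫ := integral_inner hKμ.restrict (K x)
        _ = ⟪K x, ∫ y, K y ∂μ⟫ := by rw [hKS]
        _ = ⟪∫ y, K y ∂μ, K x⟫ := real_inner_comm _ _
  -- a.e. representation of the S-difference via the complement
  have hNrep : ∀ᵐ ω ∂Pr, (∫ y in S, F ω y ∂P) - (∫ y in S, F ω y ∂Q)
      = (∫ y in Sᶜ, F ω y ∂Q) - (∫ y in Sᶜ, F ω y ∂P) := by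
    filter_upwards [h] with ω hω
    have hP := integral_add_compl hSm (hFint ω).1
    have hQ := integral_add_compl hSm (hFint ω).2
    linarith [hP, hQ, hω]
  -- extraction of an essential point of a measure concentrated on Sᶜ
  have getE : ∀ (R : Measure X), IsProbabilityMeasure R → R S = 0 →
      (∀ ω, Integrable (F ω) R) →
      ∃ y₀ : X, K y₀ = 0 ∧ ((fun ω => ∫ y, F ω y ∂ R) =ᵐ[Pr] fun ω => F ω y₀) := by
    intro R hRprob hRS hRint
    have hK0R : K =ᵐ[R] 0 := by
      rw [Filter.EventuallyEq, ae_iff]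
      refine measure_mono_null ?_ hRS
      intro y hy
      simp only [Set.mem_setOf_eq, Pi.zero_apply] at hy
      by_contra hyS
      exact hy (hK0 y hyS)
    have h01 := aux_zero_one K hchar R hK0R
    set E : Ω → ℝ := fun ω => ∫ y, F ω y ∂ R with hEdef
    have hconst : ∀ ω, (F ω) =ᵐ[R] fun _ => E ω := fun ω =>
      aux_ae_const R h01 (F ω) (hFmω ω) (hRint ω)
    have hEm : StronglyMeasurable E := hFmeas.stronglyMeasurable.integral_prod_right'
    have hWm : MeasurableSet {p : Ω × X | F p.1 p.2 ≠ E p.1} := by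
      have hs := measurableSet_eq_fun hFmeas (hEm.measurable.comp measurable_fst)
      exact hs.compl
    have hW0 : (Pr.prod R) {p : Ω × X | F p.1 p.2 ≠ E p.1} = 0 := by
      rw [Measure.measure_prod_null hWm]
      refine Filter.Eventually.of_forall fun ω => ?_
      show R (Prod.mk ω ⁻¹' {p : Ω × X | F p.1 p.2 ≠ E p.1}) = 0
      have hsec : Prod.mk ω ⁻¹' {p : Ω × X | F p.1 p.2 ≠ E p.1} = {y | ¬ F ω y = E ω} := by
        ext y; simp [Set.mem_preimage]
      rw [hsec]
      exact ae_iff.mp (hconst ω)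
    have hW0' : (R.prod Pr) (Prod.swap ⁻¹' {p : Ω × X | F p.1 p.2 ≠ E p.1}) = 0 := by
      rw [← Measure.prod_swap, Measure.map_apply measurable_swap
        (hWm.preimage measurable_swap)]
      have : Prod.swap ⁻¹' (Prod.swap ⁻¹' {p : Ω × X | F p.1 p.2 ≠ E p.1})
          = {p : Ω × X | F p.1 p.2 ≠ E p.1} := by
        ext p; simp
      rw [this]
      exact hW0
    have hae2 := (Measure.measure_prod_null (hWm.preimage measurable_swap)).mp hW0'
    have hae3 : ∀ᵐ y ∂ R, y ∉ S := by
      rw [ae_iff]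
      have : {y | ¬ y ∉ S} = S := by ext y; simp
      rw [this]; exact hRS
    obtain ⟨y₀, hy1, hy2⟩ := (hae2.and hae3).exists
    refine ⟨y₀, hK0 y₀ hy2, ?_⟩
    have hy1' : Pr {ω | ¬ F ω y₀ = E ω} = 0 := by
      have hsec : Prod.mk y₀ ⁻¹' (Prod.swap ⁻¹' {p : Ω × X | F p.1 p.2 ≠ E p.1})
          = {ω | ¬ F ω y₀ = E ω} := by
        ext ω; simp [Set.mem_preimage]
      rw [← hsec]
      simpa using hy1
    have : ∀ᵐ ω ∂Pr, F ω y₀ = E ω := ae_iff.mpr hy1'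
    exact this.mono fun ω hω => hω.symm
  -- conditional measure on Sᶜ
  have mkR : ∀ (μ : Measure X), IsProbabilityMeasure μ → Integrable K μ →
      (∀ ω, Integrable (F ω) μ) → μ Sᶜ ≠ 0 →
      ∃ R : Measure X, IsProbabilityMeasure R ∧ R S = 0 ∧ (∀ ω, Integrable (F ω) R) ∧
        (∀ ω, Integrable (F ω) μ → (∫ y in Sᶜ, F ω y ∂μ) = (μ Sᶜ).toReal * ∫ y, F ω y ∂ R) ∧
        (∫ x, K x ∂ R) = 0 := by
    intro μ hμ hKμ hFμ hμN
    have hle : μ Sᶜ ≤ 1 := prob_le_one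
    have hnt : μ Sᶜ ≠ ⊤ := (hle.trans_lt ENNReal.one_lt_top).ne
    have htr : (μ Sᶜ).toReal ≠ 0 := by
      simp [ENNReal.toReal_eq_zero_iff, hμN, hnt]
    refine ⟨(μ Sᶜ)⁻¹ • μ.restrict Sᶜ, ?_, ?_, ?_, ?_, ?_⟩
    · constructor
      rw [Measure.smul_apply, Measure.restrict_apply MeasurableSet.univ, Set.univ_inter,
        smul_eq_mul, ENNReal.inv_mul_cancel hμN hnt]
    · rw [Measure.smul_apply, Measure.restrict_apply hSm, Set.inter_compl_self,
        measure_empty, smul_eq_mul, mul_zero]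
    · intro ω
      exact ((hFμ ω).restrict).smul_measure (ENNReal.inv_ne_top.mpr hμN)
    · intro ω hint
      rw [integral_smul_measure, ENNReal.toReal_inv, smul_eq_mul, ← mul_assoc,
        mul_inv_cancel₀ htr, one_mul]
    · rw [integral_smul_measure]
      have hz : (∫ y in Sᶜ, K y ∂μ) = 0 := by
        rw [setIntegral_congr_fun hSm.compl (g := fun _ => (0 : H)) (fun y hy => hK0 y hy)]
        exact integral_zero _ _
      rw [hz, smul_zero]
  -- existence of the a.e. representation of the difference
  have main : ∃ (c : ℝ) (e : Ω → ℝ),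
      (∀ᵐ ω ∂Pr, (∫ y in S, F ω y ∂P) - (∫ y in S, F ω y ∂Q) = c * e ω) ∧
      (∀ x, (∫ ω, e ω * F ω x ∂Pr) = 0) := by
    by_cases hPN : P Sᶜ = 0 <;> by_cases hQN : Q Sᶜ = 0
    · refine ⟨0, fun _ => 0, ?_, ?_⟩
      · filter_upwards [hNrep] with ω hω
        rw [hω]
        have e1 : (∫ y in Sᶜ, F ω y ∂P) = 0 := by
          rw [Measure.restrict_eq_zero.mpr hPN]; exact integral_zero_measure _
        have e2 : (∫ y in Sᶜ, F ω y ∂Q) = 0 := by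
          rw [Measure.restrict_eq_zero.mpr hQN]; exact integral_zero_measure _
        rw [e1, e2]; ring
      · intro x; simp
    · obtain ⟨R, hRprob, hRS, hRint, hRrel, hRmean⟩ :=
        mkR Q inferInstance hKQ (fun ω => (hFint ω).2) hQN
      obtain ⟨y₀, hy₀K, hy₀⟩ := getE R hRprob hRS hRint
      refine ⟨(Q Sᶜ).toReal, fun ω => F ω y₀, ?_, ?_⟩
      · filter_upwards [hNrep, hy₀] with ω h1 h2
        rw [h1]
        have e1 : (∫ y in Sᶜ, F ω y ∂P) = 0 := by
          rw [Measure.restrict_eq_zero.mpr hPN]; exact integral_zero_measure _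
        rw [e1, hRrel ω (hFint ω).2, h2]
        ring
      · intro x
        show (∫ ω, F ω y₀ * F ω x ∂Pr) = 0
        rw [hcov y₀ x, hy₀K, inner_zero_left]
    · obtain ⟨R, hRprob, hRS, hRint, hRrel, hRmean⟩ :=
        mkR P inferInstance hKP (fun ω => (hFint ω).1) hPN
      obtain ⟨y₀, hy₀K, hy₀⟩ := getE R hRprob hRS hRint
      refine ⟨-(P Sᶜ).toReal, fun ω => F ω y₀, ?_, ?_⟩
      · filter_upwards [hNrep, hy₀] with ω h1 h2
        rw [h1]
        have e2 : (∫ y in Sᶜ, F ω y ∂Q) = 0 := by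
          rw [Measure.restrict_eq_zero.mpr hQN]; exact integral_zero_measure _
        rw [e2, hRrel ω (hFint ω).1, h2]
        ring
      · intro x
        show (∫ ω, F ω y₀ * F ω x ∂Pr) = 0
        rw [hcov y₀ x, hy₀K, inner_zero_left]
    · obtain ⟨RP, hRPprob, hRPS, hRPint, hRPrel, hRPmean⟩ :=
        mkR P inferInstance hKP (fun ω => (hFint ω).1) hPN
      obtain ⟨RQ, hRQprob, hRQS, hRQint, hRQrel, hRQmean⟩ :=
        mkR Q inferInstance hKQ (fun ω => (hFint ω).2) hQN
      have hReq : RP = RQ := hchar RP RQ hRPprob hRQprob (by rw [hRPmean, hRQmean])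
      obtain ⟨y₀, hy₀K, hy₀⟩ := getE RP hRPprob hRPS hRPint
      refine ⟨(Q Sᶜ).toReal - (P Sᶜ).toReal, fun ω => F ω y₀, ?_, ?_⟩
      · filter_upwards [hNrep, hy₀] with ω h1 h2
        rw [h1, hRQrel ω (hFint ω).2, hRPrel ω (hFint ω).1, ← hReq, h2]
        ring
      · intro x
        show (∫ ω, F ω y₀ * F ω x ∂Pr) = 0
        rw [hcov y₀ x, hy₀K, inner_zero_left]
  obtain ⟨c, e, hae, hzero⟩ := main
  have claim0 : ∀ x,
      (∫ ω, ((∫ y in S, F ω y ∂P) - (∫ y in S, F ω y ∂Q)) * F ω x ∂Pr) = 0 := by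
    intro x
    have h1 : (∫ ω, ((∫ y in S, F ω y ∂P) - (∫ y in S, F ω y ∂Q)) * F ω x ∂Pr)
        = ∫ ω, c * (e ω * F ω x) ∂Pr := by
      refine integral_congr_ae (hae.mono fun ω hω => ?_)
      show ((∫ y in S, F ω y ∂P) - ∫ y in S, F ω y ∂Q) * F ω x = c * (e ω * F ω x)
      rw [hω]; ring
    rw [h1, integral_const_mul, hzero x, mul_zero]
  have hmean : (∫ x, K x ∂P) = ∫ x, K x ∂Q := by
    have hvK : ∀ x, ⟪(∫ y, K y ∂P) - ∫ y, K y ∂Q, K x⟫ = 0 := by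
      intro x
      by_cases hx : x ∈ S
      · obtain ⟨hiP, heP⟩ := key P inferInstance hKP x hx
        obtain ⟨hiQ, heQ⟩ := key Q inferInstance hKQ x hx
        have hsub : (∫ ω, ((∫ y in S, F ω y ∂P) - (∫ y in S, F ω y ∂Q)) * F ω x ∂Pr)
            = ⟪∫ y, K y ∂P, K x⟫ - ⟪∫ y, K y ∂Q, K x⟫ := by
          rw [← heP, ← heQ, ← integral_sub hiP hiQ]
          refine integral_congr_ae (Filter.Eventually.of_forall fun ω => ?_)
          ring
        rw [inner_sub_left, ← hsub, claim0 x]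
      · rw [hK0 x hx, inner_zero_right]
    have h1 : ⟪(∫ y, K y ∂P) - ∫ y, K y ∂Q, ∫ y, K y ∂P⟫ = 0 := by
      rw [← integral_inner hKP]
      exact integral_eq_zero_of_ae (Filter.Eventually.of_forall fun y => hvK y)
    have h2 : ⟪(∫ y, K y ∂P) - ∫ y, K y ∂Q, ∫ y, K y ∂Q⟫ = 0 := by
      rw [← integral_inner hKQ]
      exact integral_eq_zero_of_ae (Filter.Eventually.of_forall fun y => hvK y)
    have hvv : ⟪(∫ y, K y ∂P) - ∫ y, K y ∂Q,
        (∫ y, K y ∂P) - ∫ y, K y ∂Q⟫ = (0 : ℝ) := by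
      rw [inner_sub_right, h1, h2, sub_zero]
    exact sub_eq_zero.mp (inner_self_eq_zero.mp hvv)
  exact hchar P Q inferInstance inferInstance hmean
end
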